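/- On the surface S ⊂ C^4 defined by xy=(z²−1)z, zu=(y²−1)y, xu=(y²−1)(z²−1), the 2-form ω = (dx ∧ dz)/x, which is a priori regular only where x ≠ 0, extends to a holomorphic 2-form on all of S; on the chart U₃ = {z² ≠ 1, y ≠ 0, y ≠ −1} with coordinates φ₃ = (y−1)/z, ψ₃ = z it equals −ψ₃ dφ₃ ∧ dψ₃ / (φ₃ψ₃ + 1), whose denominator φ₃ψ₃ + 1 = y is nonvanishing on U₃. -/

import Mathlib

/-- The surface `S ⊂ ℂ⁴` given by `xy=(z²-1)z`, `zu=(y²-1)y`, `xu=(y²-1)(z²-1)`. -/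
def S4 : Set (ℂ × ℂ × ℂ × ℂ) :=
  {s | s.1 * s.2.1 = (s.2.2.1 ^ 2 - 1) * s.2.2.1 ∧
       s.2.2.1 * s.2.2.2 = (s.2.1 ^ 2 - 1) * s.2.1 ∧
       s.1 * s.2.2.2 = (s.2.1 ^ 2 - 1) * (s.2.2.1 ^ 2 - 1)}

/-- The chart `U₃ = {s ∈ S : z² ≠ 1, y ≠ 0, y ≠ -1}`. -/
def U3 : Set (ℂ × ℂ × ℂ × ℂ) :=
  {s ∈ S4 | s.2.2.1 ^ 2 ≠ 1 ∧ s.2.1 ≠ 0 ∧ s.2.1 ≠ -1}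

/-- The inverse of the coordinate chart `(φ₃, ψ₃) = ((y-1)/z, z)` on `U₃`:
`y = φψ + 1`, `z = ψ`, `x = (z²-1)z/y`, `u = (y²-1)y/z = φ(φψ+2)(φψ+1)`. -/
noncomputable def chart3 (φ ψ : ℂ) : ℂ × ℂ × ℂ × ℂ :=
  ((ψ ^ 2 - 1) * ψ / (φ * ψ + 1), φ * ψ + 1, ψ, φ * (φ * ψ + 2) * (φ * ψ + 1))

/-- The parameter domain of the chart. -/
def chart3Dom : Set (ℂ × ℂ) :=
  {q | q.1 * q.2 + 1 ≠ 0 ∧ q.1 * q.2 + 1 ≠ -1 ∧ q.2 ^ 2 ≠ 1}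

lemma mem_U3 (φ ψ : ℂ) (h : (φ, ψ) ∈ chart3Dom) : chart3 φ ψ ∈ U3 := by
  obtain ⟨hy, hy2, hz⟩ := h
  have hy' : ψ * φ + 1 ≠ 0 := by simpa [mul_comm] using hy
  refine ⟨⟨?_, ?_, ?_⟩, hz, hy, hy2⟩ <;> simp only [chart3] <;>
    (try field_simp) <;> ring

/-- On the surface `S ⊂ ℂ⁴` cut out by `xy=(z²-1)z`, `zu=(y²-1)y`,
`xu=(y²-1)(z²-1)`, the 2-form `ω = dx ∧ dz / x`, a priori regular only where
`x ≠ 0`, extends holomorphically to the chart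
`U₃ = {z² ≠ 1, y ≠ 0, y ≠ -1}` with coordinates `φ₃ = (y-1)/z`, `ψ₃ = z`:
there it equals `-ψ₃ dφ₃ ∧ dψ₃ / (φ₃ψ₃ + 1)`, whose denominator
`φ₃ψ₃ + 1 = y` is nonvanishing on `U₃`. -/
theorem stmt_15 :
    -- `(φ₃, ψ₃)` are coordinates on `U₃`: the chart is a bijective parametrization
    (∀ φ ψ : ℂ, (φ, ψ) ∈ chart3Dom → chart3 φ ψ ∈ U3) ∧
    ((fun q : ℂ × ℂ => chart3 q.1 q.2) '' chart3Dom = U3) ∧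
    Set.InjOn (fun q : ℂ × ℂ => chart3 q.1 q.2) chart3Dom ∧
    -- on `z = ψ₃ ≠ 0` the chart coordinate is `φ₃ = (y-1)/z`
    (∀ φ ψ : ℂ, (φ, ψ) ∈ chart3Dom → ψ ≠ 0 →
      φ = ((chart3 φ ψ).2.1 - 1) / (chart3 φ ψ).2.2.1) ∧
    -- the denominator `φ₃ψ₃ + 1 = y` never vanishes on the chart
    (∀ φ ψ : ℂ, (φ, ψ) ∈ chart3Dom →
      φ * ψ + 1 = (chart3 φ ψ).2.1 ∧ φ * ψ + 1 ≠ 0) ∧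
    -- change of coordinates: the Jacobian `∂(x,z)/∂(φ₃,ψ₃)` equals
    -- `x · (-ψ₃/(φ₃ψ₃+1))`, i.e. `dx ∧ dz / x = -ψ₃ dφ₃ ∧ dψ₃ / (φ₃ψ₃+1)`
    (∀ φ ψ : ℂ, (φ, ψ) ∈ chart3Dom →
      deriv (fun a : ℂ => (ψ ^ 2 - 1) * ψ / (a * ψ + 1)) φ
          * deriv (fun b : ℂ => b) ψ
        - deriv (fun b : ℂ => (b ^ 2 - 1) * b / (φ * b + 1)) ψ
          * deriv (fun _ : ℂ => ψ) φ
        = ((ψ ^ 2 - 1) * ψ / (φ * ψ + 1)) * (-ψ / (φ * ψ + 1))) := by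
  refine ⟨mem_U3, ?_, ?_, ?_, ?_, ?_⟩
  · apply Set.Subset.antisymm
    · rintro _ ⟨⟨φ, ψ⟩, hq, rfl⟩
      exact mem_U3 φ ψ hq
    · rintro ⟨x, y, z, u⟩ ⟨⟨e1, e2, e3⟩, hz, hy, hy2⟩
      by_cases hz0 : z = 0
      · subst hz0
        simp only [Set.mem_setOf_eq] at e1 e2 e3 hz hy hy2 ⊢
        have hy1 : y = 1 := by
          have h0 : (y - 1) * ((y + 1) * y) = 0 := by linear_combination -e2
          rcases mul_eq_zero.1 h0 with h | h
          · exact sub_eq_zero.1 h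
          · rcases mul_eq_zero.1 h with h | h
            · exact absurd (by linear_combination h) hy2
            · exact absurd h hy
        have hx0 : x = 0 := by
          have : x * y = 0 := by linear_combination e1
          rcases mul_eq_zero.1 this with h | h
          · exact h
          · exact absurd h hy
        refine ⟨(u / 2, 0), ⟨by norm_num, by norm_num, by norm_num⟩, ?_⟩
        simp only [chart3, mul_zero, zero_add]
        subst hx0 hy1
        norm_num
      · refine ⟨((y - 1) / z, z), ⟨?_, ?_, ?_⟩, ?_⟩
        · rw [div_mul_cancel₀ _ hz0]; simpa using hy
        · rw [div_mul_cancel₀ _ hz0]; simpa using hy2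
        · exact hz
        · have hyz : (y - 1) / z * z + 1 = y := by
            rw [div_mul_cancel₀ _ hz0]; ring
          simp only [chart3, hyz]
          have hx : (z ^ 2 - 1) * z / y = x := by
            rw [← e1, mul_div_assoc, div_self hy, mul_one]
          have hu : (y - 1) / z * (y + 1) * y = u := by
            field_simp
            linear_combination -e2
          refine Prod.ext hx (Prod.ext rfl (Prod.ext rfl ?_))
          rw [div_mul_cancel₀ _ hz0]
          linear_combination hu
  · rintro ⟨φ1, ψ1⟩ h1 ⟨φ2, ψ2⟩ h2 he
    simp only [chart3, Prod.mk.injEq] at he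
    obtain ⟨-, hy, hz, hu⟩ := he
    subst hz
    by_cases hp : ψ1 = 0
    · subst hp
      simp only [mul_zero, zero_add] at hu
      have : φ1 = φ2 := by linear_combination hu / 2
      simp [this]
    · have : φ1 = φ2 := mul_right_cancel₀ hp (by linear_combination hy)
      simp [this]
  · intro φ ψ h hψ
    simp only [chart3]
    field_simp
    ring
  · intro φ ψ h
    exact ⟨rfl, h.1⟩
  · intro φ ψ ⟨hy, hy2, hz⟩
    have hlin : HasDerivAt (fun a : ℂ => a * ψ + 1) ψ φ := by
      simpa using ((hasDerivAt_id φ).mul_const ψ).add_const 1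
    have hd : HasDerivAt (fun a : ℂ => (ψ ^ 2 - 1) * ψ / (a * ψ + 1))
        ((0 * (φ * ψ + 1) - (ψ ^ 2 - 1) * ψ * ψ) / (φ * ψ + 1) ^ 2) φ :=
      (hasDerivAt_const φ ((ψ ^ 2 - 1) * ψ)).div hlin hy
    rw [hd.deriv, deriv_id'', deriv_const]
    simp only [Set.mem_setOf_eq] at hy
    simp only [mul_zero, sub_zero, mul_one, zero_mul, zero_sub]
    rw [div_mul_div_comm, div_eq_div_iff (pow_ne_zero 2 hy) (mul_ne_zero hy hy)]
    ring
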